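/- Consider the channel P(Y=y | X=x) = C(m,y)·(xθ/m)^y·(1−xθ/m)^{m−y} for x ∈ {0,...,m}, θ ∈ (0,1). Any capacity-achieving input distribution P satisfies P(m) > 0. -/

import Mathlib

open Real Finset

/-- The binomial particle-intensity channel law:
`P(Y = y | X = x) = C(m,y) (xθ/m)^y (1 − xθ/m)^{m−y}`. -/
noncomputable def picChannel (m : ℕ) (θ : ℝ) (x y : ℕ) : ℝ :=
  (m.choose y : ℝ) * ((x : ℝ) * θ / m) ^ y * (1 - (x : ℝ) * θ / m) ^ (m - y)

/-- The output marginal of the channel under input distribution `P`. -/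
noncomputable def picOut (m : ℕ) (θ : ℝ) (P : ℕ → ℝ) (y : ℕ) : ℝ :=
  ∑ x ∈ range (m + 1), P x * picChannel m θ x y

/-- The mutual information `I(X;Y)` (in bits) of the channel `picChannel m θ`
under input distribution `P` on `{0,…,m}`, with the convention `0 log 0 = 0`
(satisfied by `Real.logb`). -/
noncomputable def picMutInfo (m : ℕ) (θ : ℝ) (P : ℕ → ℝ) : ℝ :=
  ∑ x ∈ range (m + 1), ∑ y ∈ range (m + 1),
    P x * picChannel m θ x y *
      Real.logb 2 (picChannel m θ x y / picOut m θ P y)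

/-- `P` is a probability mass function on `{0,…,m}`. -/
def IsPMFOn (m : ℕ) (P : ℕ → ℝ) : Prop :=
  (∀ x, 0 ≤ P x) ∧ ∑ x ∈ range (m + 1), P x = 1 ∧ ∀ x, m < x → P x = 0

/-- The binomial probability mass function. -/
noncomputable def binP (n : ℕ) (q : ℝ) (y : ℕ) : ℝ :=
  (n.choose y : ℝ) * q ^ y * (1 - q) ^ (n - y)

lemma sum_binP (n : ℕ) (q : ℝ) : ∑ y ∈ range (n+1), binP n q y = 1 := by
  have h := add_pow q (1-q) n
  rw [add_sub_cancel, one_pow] at h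
  unfold binP
  rw [show ∑ y ∈ range (n+1), (n.choose y : ℝ) * q ^ y * (1 - q) ^ (n - y)
      = ∑ y ∈ range (n+1), q ^ y * (1-q) ^ (n - y) * (n.choose y : ℝ) from
    sum_congr rfl (by intros; ring), ← h]

lemma sum_mul_binP (n : ℕ) (q : ℝ) :
    ∑ y ∈ range (n+1), (y:ℝ) * binP n q y = n * q := by
  cases n with
  | zero => simp [binP]
  | succ s =>
    rw [Finset.sum_range_succ']
    simp only [Nat.cast_zero, zero_mul, add_zero]
    have key : ∀ i ∈ range (s+1), ((i:ℝ)+1) * binP (s+1) q (i+1)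
        = ((s:ℝ)+1) * q * binP s q i := by
      intro i hi
      unfold binP
      have h1 : (s+1) * Nat.choose s i = Nat.choose (s+1) (i+1) * (i+1) :=
        Nat.add_one_mul_choose_eq s i
      have h2 : ((s:ℝ)+1) * (Nat.choose s i : ℝ) = (Nat.choose (s+1) (i+1) : ℝ) * ((i:ℝ)+1) := by
        exact_mod_cast congrArg (Nat.cast (R := ℝ)) h1
      have h3 : (s+1) - (i+1) = s - i := by omega
      rw [h3]
      calc ((i:ℝ)+1) * ((Nat.choose (s+1) (i+1) : ℝ) * q^(i+1) * (1-q)^(s-i))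
          = ((Nat.choose (s+1) (i+1) : ℝ) * ((i:ℝ)+1)) * q^(i+1) * (1-q)^(s-i) := by ring
        _ = (((s:ℝ)+1) * (Nat.choose s i : ℝ)) * q^(i+1) * (1-q)^(s-i) := by rw [← h2]
        _ = ((s:ℝ)+1) * q * ((Nat.choose s i : ℝ) * q^i * (1-q)^(s-i)) := by ring
    calc ∑ i ∈ range (s+1), ((i+1:ℕ):ℝ) * binP (s+1) q (i+1)
        = ∑ i ∈ range (s+1), ((s:ℝ)+1) * q * binP s q i := by
          apply sum_congr rfl
          intro i hi
          have := key i hi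
          push_cast at this ⊢
          linarith [this]
      _ = ((s:ℝ)+1) * q * ∑ i ∈ range (s+1), binP s q i := by rw [Finset.mul_sum]
      _ = ((s:ℝ)+1) * q := by rw [sum_binP]; ring
      _ = ((s+1:ℕ):ℝ) * q := by push_cast; ring

lemma binP_nonneg (n : ℕ) (q : ℝ) (h0 : 0 ≤ q) (h1 : q ≤ 1) (y : ℕ) : 0 ≤ binP n q y := by
  unfold binP
  have : (0:ℝ) ≤ 1 - q := by linarith
  positivity

lemma binP_pos (n : ℕ) (q : ℝ) (h0 : 0 < q) (h1 : q < 1) (y : ℕ) (hy : y ≤ n) :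
    0 < binP n q y := by
  unfold binP
  have h2 : (0:ℝ) < 1 - q := by linarith
  have h3 : 0 < n.choose y := Nat.choose_pos hy
  have h4 : (0:ℝ) < (n.choose y : ℝ) := by exact_mod_cast h3
  positivity

lemma binP_conv (n : ℕ) (p r : ℝ) (w : ℕ) (hw : w ≤ n) :
    binP n (p + (1-p)*r) w
      = ∑ y ∈ range (w+1), binP n p y * binP (n-y) r (w-y) := by
  have key : ∀ y ∈ range (w+1), binP n p y * binP (n-y) r (w-y)
      = ((n.choose w : ℝ) * (w.choose y : ℝ)) * (p^y * ((1-p)*r)^(w-y))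
          * (((1-p)*(1-r))^(n-w)) := by
    intro y hy
    have hyw : y ≤ w := Nat.lt_succ_iff.mp (mem_range.mp hy)
    unfold binP
    have hsub : (n-y) - (w-y) = n - w := by omega
    have hchoose : (n.choose y : ℝ) * ((n-y).choose (w-y) : ℝ)
        = (n.choose w : ℝ) * (w.choose y : ℝ) := by
      exact_mod_cast congrArg (Nat.cast (R := ℝ)) (Nat.choose_mul (n := n) hyw).symm
    have hp1 : (1-p)^(n-y) = (1-p)^(w-y) * (1-p)^(n-w) := by
      rw [← pow_add]; congr 1; omega
    rw [hsub, hp1]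
    calc (n.choose y : ℝ) * p ^ y * ((1-p)^(w-y) * (1-p)^(n-w))
          * ((n-y).choose (w-y) * r^(w-y) * (1-r)^(n-w))
        = ((n.choose y : ℝ) * ((n-y).choose (w-y) : ℝ)) *
            (p^y * ((1-p)^(w-y) * r^(w-y))) * ((1-p)^(n-w) * (1-r)^(n-w)) := by ring
      _ = ((n.choose w : ℝ) * (w.choose y : ℝ)) * (p^y * ((1-p)*r)^(w-y))
            * (((1-p)*(1-r))^(n-w)) := by rw [hchoose, mul_pow, mul_pow]
  rw [sum_congr rfl key]
  have hbin : ∑ y ∈ range (w+1), (w.choose y : ℝ) * p^y * ((1-p)*r)^(w-y)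
      = (p + (1-p)*r)^w := by
    rw [add_pow]
    apply sum_congr rfl; intros; ring
  unfold binP
  have h1 : 1 - (p + (1-p)*r) = (1-p)*(1-r) := by ring
  rw [h1]
  rw [show ∑ y ∈ range (w+1), ((n.choose w : ℝ) * (w.choose y : ℝ))
        * (p^y * ((1-p)*r)^(w-y)) * (((1-p)*(1-r))^(n-w))
      = (n.choose w : ℝ) * (∑ y ∈ range (w+1), (w.choose y : ℝ) * p^y * ((1-p)*r)^(w-y))
        * (((1-p)*(1-r))^(n-w)) by
    rw [Finset.mul_sum, Finset.sum_mul]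
    apply sum_congr rfl; intros; ring]
  rw [hbin]

lemma incr_bound (φ : ℕ → ℝ) (c : ℝ) (n : ℕ) (hφ : ∀ y, y < n → φ (y+1) ≤ φ y + c) :
    ∀ z y, y + z ≤ n → φ (y+z) ≤ φ y + c * z := by
  intro z
  induction z with
  | zero => intro y _; simp
  | succ t ih =>
    intro y h
    have h1 : φ (y + t) ≤ φ y + c * t := ih y (by omega)
    have h2 : φ (y + t + 1) ≤ φ (y + t) + c := hφ (y+t) (by omega)
    have : y + (t+1) = (y + t) + 1 := by omega
    rw [this]
    push_cast
    linarith

lemma swap_tri (n : ℕ) (F : ℕ → ℕ → ℝ) :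
    ∑ w ∈ range (n+1), ∑ y ∈ range (w+1), F y w
      = ∑ y ∈ range (n+1), ∑ z ∈ range ((n-y)+1), F y (y+z) := by
  have step1 : ∀ w ∈ range (n+1), ∑ y ∈ range (w+1), F y w
      = ∑ y ∈ range (n+1), if y ≤ w then F y w else 0 := by
    intro w hw
    have hwn := Nat.lt_succ_iff.mp (mem_range.mp hw)
    rw [← Finset.sum_filter]
    congr 1
    ext a
    simp only [mem_filter, mem_range]
    omega
  rw [sum_congr rfl step1, Finset.sum_comm]
  apply sum_congr rfl
  intro y hy
  have hyn := Nat.lt_succ_iff.mp (mem_range.mp hy)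
  have step2 : ∑ w ∈ range (n+1), (if y ≤ w then F y w else 0)
      = ∑ w ∈ Ico y (n+1), F y w := by
    rw [← Finset.sum_filter]
    congr 1
    ext a
    simp only [mem_filter, mem_range, mem_Ico]
    omega
  rw [step2, Finset.sum_Ico_eq_sum_range]
  have : n + 1 - y = (n - y) + 1 := by omega
  rw [this]

lemma shift_bound (n : ℕ) (p r c : ℝ) (hp0 : 0 < p) (hp1 : p < 1) (hr0 : 0 < r) (hr1 : r < 1)
    (φ : ℕ → ℝ) (hφ : ∀ y, y < n → φ (y+1) ≤ φ y + c) :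
    ∑ w ∈ range (n+1), binP n (p + (1-p)*r) w * φ w
      ≤ (∑ y ∈ range (n+1), binP n p y * φ y) + c * (n * ((1-p)*r)) := by
  have hrw : ∀ w ∈ range (n+1), binP n (p + (1-p)*r) w * φ w
      = ∑ y ∈ range (w+1), (binP n p y * binP (n-y) r (w-y)) * φ w := by
    intro w hw
    rw [binP_conv n p r w (Nat.lt_succ_iff.mp (mem_range.mp hw)), Finset.sum_mul]
  rw [sum_congr rfl hrw,
    swap_tri n (fun y w => (binP n p y * binP (n-y) r (w-y)) * φ w)]
  simp only [Nat.add_sub_cancel_left]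
  have hbound : ∀ y ∈ range (n+1), ∑ z ∈ range ((n-y)+1), binP n p y * binP (n-y) r z * φ (y+z)
      ≤ binP n p y * (φ y + c * (((n:ℝ)-y) * r)) := by
    intro y hy
    have hyn := Nat.lt_succ_iff.mp (mem_range.mp hy)
    have hterm : ∀ z ∈ range ((n-y)+1), binP n p y * binP (n-y) r z * φ (y+z)
        ≤ binP n p y * binP (n-y) r z * (φ y + c * z) := by
      intro z hz
      have hzn := Nat.lt_succ_iff.mp (mem_range.mp hz)
      have h1 : φ (y+z) ≤ φ y + c * z := incr_bound φ c n hφ z y (by omega)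
      have h2 : 0 ≤ binP n p y * binP (n-y) r z :=
        mul_nonneg (binP_nonneg n p hp0.le hp1.le y) (binP_nonneg (n-y) r hr0.le hr1.le z)
      exact mul_le_mul_of_nonneg_left h1 h2
    calc ∑ z ∈ range ((n-y)+1), binP n p y * binP (n-y) r z * φ (y+z)
        ≤ ∑ z ∈ range ((n-y)+1), binP n p y * binP (n-y) r z * (φ y + c * z) :=
          Finset.sum_le_sum hterm
      _ = binP n p y * ((φ y) * (∑ z ∈ range ((n-y)+1), binP (n-y) r z)
            + c * (∑ z ∈ range ((n-y)+1), (z:ℝ) * binP (n-y) r z)) := by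
          rw [Finset.mul_sum, Finset.mul_sum, ← Finset.sum_add_distrib, Finset.mul_sum]
          apply sum_congr rfl; intros; ring
      _ = binP n p y * (φ y + c * (((n-y:ℕ):ℝ) * r)) := by
          rw [sum_binP, sum_mul_binP]; ring
      _ = binP n p y * (φ y + c * (((n:ℝ)-y) * r)) := by
          congr 2
          push_cast [Nat.cast_sub hyn]
          ring
  calc ∑ y ∈ range (n+1), ∑ z ∈ range ((n-y)+1), binP n p y * binP (n-y) r z * φ (y+z)
      ≤ ∑ y ∈ range (n+1), binP n p y * (φ y + c * (((n:ℝ)-y) * r)) :=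
        Finset.sum_le_sum hbound
    _ = ∑ y ∈ range (n+1), (binP n p y * φ y + (c*r*(n:ℝ)) * binP n p y
          - (c*r) * ((y:ℝ) * binP n p y)) := sum_congr rfl (by intros; ring)
    _ = (∑ y ∈ range (n+1), binP n p y * φ y)
          + (c*r*(n:ℝ)) * (∑ y ∈ range (n+1), binP n p y)
          - (c*r) * (∑ y ∈ range (n+1), (y:ℝ) * binP n p y) := by
        rw [Finset.sum_sub_distrib, Finset.sum_add_distrib, ← Finset.mul_sum, ← Finset.mul_sum]
    _ = (∑ y ∈ range (n+1), binP n p y * φ y) + c * ((n:ℝ) * ((1-p)*r)) := by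
        rw [sum_binP, sum_mul_binP]; ring

lemma sum_log_div_le (s : Finset ℕ) (f g : ℕ → ℝ) (hf : ∀ y ∈ s, 0 < f y)
    (hg : ∀ y ∈ s, 0 < g y) :
    ∑ y ∈ s, f y * Real.log (f y / g y)
      ≤ (∑ y ∈ s, f y * f y / g y) - ∑ y ∈ s, f y := by
  rw [← Finset.sum_sub_distrib]
  apply Finset.sum_le_sum
  intro y hy
  have h1 : 0 < f y / g y := div_pos (hf y hy) (hg y hy)
  have h2 := Real.log_le_sub_one_of_pos h1
  have h3 := mul_le_mul_of_nonneg_left h2 (hf y hy).le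
  calc f y * Real.log (f y / g y) ≤ f y * (f y / g y - 1) := h3
    _ = f y * f y / g y - f y := by ring

lemma sum_log_div_ge (s : Finset ℕ) (f g : ℕ → ℝ) (hf : ∀ y ∈ s, 0 < f y)
    (hg : ∀ y ∈ s, 0 < g y) :
    (∑ y ∈ s, f y) - ∑ y ∈ s, g y ≤ ∑ y ∈ s, f y * Real.log (f y / g y) := by
  rw [← Finset.sum_sub_distrib]
  apply Finset.sum_le_sum
  intro y hy
  have h1 : 0 < g y / f y := div_pos (hg y hy) (hf y hy)
  have h2 := Real.log_le_sub_one_of_pos h1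
  have h4 : Real.log (f y / g y) = - Real.log (g y / f y) := by
    rw [← Real.log_inv]
    congr 1
    field_simp
  have h5 : 1 - g y / f y ≤ Real.log (f y / g y) := by rw [h4]; linarith
  have h6 := mul_le_mul_of_nonneg_left h5 (hf y hy).le
  have h7 : f y * (1 - g y / f y) = f y - g y := by
    rw [mul_sub, mul_one, mul_div_cancel₀ _ (hf y hy).ne']
  linarith

lemma nG_decomp (n : ℕ) (q : ℝ) (hq0 : 0 < q) (hq1 : q < 1) (out : ℕ → ℝ)
    (hout : ∀ y ∈ range (n+1), 0 < out y) :
    ∑ y ∈ range (n+1), binP n q y * Real.log (binP n q y / out y)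
      = (n*q) * Real.log q + ((n:ℝ) - n*q) * Real.log (1-q)
        - ∑ y ∈ range (n+1), binP n q y * (Real.log (out y) - Real.log (n.choose y : ℝ)) := by
  have key : ∀ y ∈ range (n+1), binP n q y * Real.log (binP n q y / out y)
      = ((y:ℝ) * binP n q y) * Real.log q
        + ((n:ℝ) * binP n q y - (y:ℝ) * binP n q y) * Real.log (1-q)
        - binP n q y * (Real.log (out y) - Real.log (n.choose y : ℝ)) := by
    intro y hy
    have hyn := Nat.lt_succ_iff.mp (mem_range.mp hy)
    have hC : (0:ℝ) < (n.choose y : ℝ) := by exact_mod_cast Nat.choose_pos hyn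
    have hq1' : (0:ℝ) < 1 - q := by linarith
    have hlogbin : Real.log (binP n q y)
        = Real.log (n.choose y : ℝ) + y * Real.log q + ((n-y:ℕ):ℝ) * Real.log (1-q) := by
      unfold binP
      rw [Real.log_mul (by positivity) (by positivity),
          Real.log_mul (by positivity) (by positivity),
          Real.log_pow, Real.log_pow]
    have hlogdiv : Real.log (binP n q y / out y) = Real.log (binP n q y) - Real.log (out y) :=
      Real.log_div (binP_pos n q hq0 hq1 y hyn).ne' (hout y hy).ne'
    rw [hlogdiv, hlogbin]
    have hcast : ((n-y:ℕ):ℝ) = (n:ℝ) - (y:ℝ) := by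
      push_cast [Nat.cast_sub hyn]; ring
    rw [hcast]
    ring
  rw [sum_congr rfl key]
  rw [Finset.sum_sub_distrib, Finset.sum_add_distrib, ← Finset.sum_mul, ← Finset.sum_mul,
      Finset.sum_sub_distrib, ← Finset.mul_sum, sum_binP, sum_mul_binP]
  ring

/-- mutual information in nats -/
noncomputable def nMI (m : ℕ) (θ : ℝ) (Q : ℕ → ℝ) : ℝ :=
  ∑ x ∈ range (m+1), ∑ y ∈ range (m+1),
    Q x * picChannel m θ x y * Real.log (picChannel m θ x y / picOut m θ Q y)

lemma picChannel_eq_binP (m : ℕ) (θ : ℝ) (x y : ℕ) :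
    picChannel m θ x y = binP m ((x:ℝ) * θ / m) y := rfl

lemma picChannel_nonneg (m : ℕ) (θ : ℝ) (hθ0 : 0 < θ) (hθ1 : θ < 1) (x : ℕ) (hx : x ≤ m)
    (y : ℕ) : 0 ≤ picChannel m θ x y := by
  rw [picChannel_eq_binP]
  apply binP_nonneg
  · positivity
  · rcases Nat.eq_zero_or_pos m with hm | hm
    · simp [hm]
    · have hm' : (0:ℝ) < m := by exact_mod_cast hm
      rw [div_le_one hm']
      have : (x:ℝ) ≤ (m:ℝ) := by exact_mod_cast hx
      nlinarith

lemma sum_picChannel (m : ℕ) (θ : ℝ) (x : ℕ) :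
    ∑ y ∈ range (m+1), picChannel m θ x y = 1 := by
  simp only [picChannel_eq_binP]; exact sum_binP m _

lemma sum_picOut (m : ℕ) (θ : ℝ) (P : ℕ → ℝ) (hsum : ∑ x ∈ range (m+1), P x = 1) :
    ∑ y ∈ range (m+1), picOut m θ P y = 1 := by
  unfold picOut
  rw [Finset.sum_comm]
  calc ∑ x ∈ range (m+1), ∑ y ∈ range (m+1), P x * picChannel m θ x y
      = ∑ x ∈ range (m+1), P x * ∑ y ∈ range (m+1), picChannel m θ x y := by
        apply sum_congr rfl; intros; rw [Finset.mul_sum]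
    _ = ∑ x ∈ range (m+1), P x := by
        apply sum_congr rfl; intros x _; rw [sum_picChannel]; ring
    _ = 1 := hsum

lemma picMutInfo_eq_nMI (m : ℕ) (θ : ℝ) (Q : ℕ → ℝ) :
    nMI m θ Q = picMutInfo m θ Q * Real.log 2 := by
  unfold nMI picMutInfo
  rw [Finset.sum_mul]
  apply sum_congr rfl; intro x _
  rw [Finset.sum_mul]
  apply sum_congr rfl; intro y _
  rw [Real.logb]
  have h2 : Real.log 2 ≠ 0 := by
    have := Real.log_pos (by norm_num : (1:ℝ) < 2); linarith
  field_simp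

lemma nMI_eq_sum_nG (m : ℕ) (θ : ℝ) (Q : ℕ → ℝ) :
    nMI m θ Q = ∑ x ∈ range (m+1), Q x *
      ∑ y ∈ range (m+1), picChannel m θ x y * Real.log (picChannel m θ x y / picOut m θ Q y) := by
  unfold nMI
  apply sum_congr rfl; intro x _
  rw [Finset.mul_sum]
  apply sum_congr rfl; intros; ring

lemma nG_le_nMI (m : ℕ) (hm : 1 ≤ m) (θ : ℝ) (hθ0 : 0 < θ) (hθ1 : θ < 1)
    (P : ℕ → ℝ) (hP : IsPMFOn m P)
    (hopt : ∀ Q : ℕ → ℝ, IsPMFOn m Q → picMutInfo m θ Q ≤ picMutInfo m θ P)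
    (hout : ∀ y ∈ range (m+1), 0 < picOut m θ P y)
    (a : ℕ) (ha : a ≤ m) :
    ∑ y ∈ range (m+1), picChannel m θ a y *
        Real.log (picChannel m θ a y / picOut m θ P y) ≤ nMI m θ P := by
  obtain ⟨hPnn, hPsum, hPz⟩ := hP
  set W : ℕ → ℕ → ℝ := picChannel m θ with hW
  set o : ℕ → ℝ := picOut m θ P with ho
  set nG : ℕ → ℝ := fun x => ∑ y ∈ range (m+1), W x y * Real.log (W x y / o y) with hnG
  set J : ℝ := nMI m θ P with hJ
  set χ : ℝ := ∑ y ∈ range (m+1), (W a y - o y)^2 / o y with hχ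
  have hWnn : ∀ x, x ≤ m → ∀ y, 0 ≤ W x y := fun x hx y =>
    picChannel_nonneg m θ hθ0 hθ1 x hx y
  have hχnn : 0 ≤ χ := by
    rw [hχ]
    apply Finset.sum_nonneg
    intro y hy
    exact div_nonneg (sq_nonneg _) (hout y hy).le
  have hJsum : J = ∑ x ∈ range (m+1), P x * nG x := nMI_eq_sum_nG m θ P
  -- main estimate for each t
  have key : ∀ t : ℝ, 0 < t → t < 1 → t * (nG a - J) ≤ t^2 * χ := by
    intro t ht0 ht1
    set Q : ℕ → ℝ := fun x => (1-t) * P x + t * (if x = a then 1 else 0) with hQ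
    have hQpmf : IsPMFOn m Q := by
      refine ⟨?_, ?_, ?_⟩
      · intro x
        have hx' := hPnn x
        by_cases hxa : x = a
        · subst hxa
          simp [hQ]
          nlinarith
        · simp only [hQ, if_neg hxa, mul_zero, add_zero]
          nlinarith
      · rw [hQ]
        rw [Finset.sum_add_distrib, ← Finset.mul_sum, ← Finset.mul_sum, hPsum]
        rw [Finset.sum_ite_eq' (range (m+1)) a (fun _ => (1:ℝ))]
        simp [Nat.lt_succ_iff, ha]
      · intro x hx
        have hxa : x ≠ a := by omega
        simp [hQ, hxa, hPz x hx]
    have hmem : a ∈ range (m+1) := mem_range.mpr (Nat.lt_succ_iff.mpr ha)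
    have hoQ : ∀ y, picOut m θ Q y = (1-t) * o y + t * W a y := by
      intro y
      unfold picOut
      calc ∑ x ∈ range (m+1), Q x * picChannel m θ x y
          = ∑ x ∈ range (m+1), ((1-t) * (P x * picChannel m θ x y)
              + t * (if x = a then picChannel m θ x y else 0)) := by
            apply sum_congr rfl
            intro x _
            by_cases hxa : x = a <;> simp [hQ, hxa] <;> ring
        _ = (1-t) * (∑ x ∈ range (m+1), P x * picChannel m θ x y)
              + t * (∑ x ∈ range (m+1), if x = a then picChannel m θ x y else 0) := by
            rw [Finset.sum_add_distrib, ← Finset.mul_sum, ← Finset.mul_sum]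
        _ = (1-t) * o y + t * W a y := by
            rw [Finset.sum_ite_eq' (range (m+1)) a (fun x => picChannel m θ x y)]
            simp [hmem, ho, hW, picOut]
    have hoQpos : ∀ y ∈ range (m+1), 0 < picOut m θ Q y := by
      intro y hy
      rw [hoQ y]
      have h1 := hout y hy
      have h2 : 0 ≤ W a y := hWnn a ha y
      nlinarith
    -- splitting of nMI Q
    have hsplit : nMI m θ Q = (∑ x ∈ range (m+1), Q x * nG x)
        + ∑ y ∈ range (m+1), picOut m θ Q y * Real.log (o y / picOut m θ Q y) := by
      have hterm : ∀ x ∈ range (m+1), ∀ y ∈ range (m+1),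
          Q x * W x y * Real.log (W x y / picOut m θ Q y)
            = Q x * (W x y * Real.log (W x y / o y))
              + (Q x * W x y) * Real.log (o y / picOut m θ Q y) := by
        intro x hx y hy
        have hxm := Nat.lt_succ_iff.mp (mem_range.mp hx)
        rcases eq_or_lt_of_le (hWnn x hxm y) with hW0 | hWpos
        · rw [← hW0]; ring_nf
        · have h1 : W x y / picOut m θ Q y = (W x y / o y) * (o y / picOut m θ Q y) := by
            rw [div_mul_div_comm]
            rw [mul_comm (o y) _]
            rw [mul_div_mul_right _ _ (hout y hy).ne']
          rw [h1, Real.log_mul (div_pos hWpos (hout y hy)).ne'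
            (div_pos (hout y hy) (hoQpos y hy)).ne']
          ring
      calc nMI m θ Q = ∑ x ∈ range (m+1), ∑ y ∈ range (m+1),
            (Q x * (W x y * Real.log (W x y / o y))
              + (Q x * W x y) * Real.log (o y / picOut m θ Q y)) := by
            unfold nMI
            exact sum_congr rfl fun x hx => sum_congr rfl fun y hy => hterm x hx y hy
        _ = (∑ x ∈ range (m+1), Q x * nG x)
              + ∑ x ∈ range (m+1), ∑ y ∈ range (m+1),
                  (Q x * W x y) * Real.log (o y / picOut m θ Q y) := by
            rw [← Finset.sum_add_distrib]
            apply sum_congr rfl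
            intro x _
            rw [Finset.sum_add_distrib]
            congr 1
            rw [hnG, Finset.mul_sum]
        _ = (∑ x ∈ range (m+1), Q x * nG x)
              + ∑ y ∈ range (m+1), picOut m θ Q y * Real.log (o y / picOut m θ Q y) := by
            congr 1
            rw [Finset.sum_comm]
            apply sum_congr rfl
            intro y _
            rw [← Finset.sum_mul]
            congr 1
    -- first part equals (1-t) J + t nG a
    have hfirst : ∑ x ∈ range (m+1), Q x * nG x = (1-t) * J + t * nG a := by
      calc ∑ x ∈ range (m+1), Q x * nG x
          = ∑ x ∈ range (m+1), ((1-t) * (P x * nG x)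
              + t * (if x = a then nG x else 0)) := by
            apply sum_congr rfl
            intro x _
            by_cases hxa : x = a <;> simp [hQ, hxa] <;> ring
        _ = (1-t) * (∑ x ∈ range (m+1), P x * nG x)
              + t * (∑ x ∈ range (m+1), if x = a then nG x else 0) := by
            rw [Finset.sum_add_distrib, ← Finset.mul_sum, ← Finset.mul_sum]
        _ = (1-t) * J + t * nG a := by
            rw [Finset.sum_ite_eq' (range (m+1)) a nG, hJsum]
            simp [hmem]
    -- bound on the relative-entropy remainder
    have hsum_oQ : ∑ y ∈ range (m+1), picOut m θ Q y = 1 := sum_picOut m θ Q hQpmf.2.1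
    have hsum_o : ∑ y ∈ range (m+1), o y = 1 := sum_picOut m θ P hPsum
    have hsum_W : ∑ y ∈ range (m+1), W a y = 1 := sum_picChannel m θ a
    have hchisq : ∑ y ∈ range (m+1), picOut m θ Q y * picOut m θ Q y / o y
        = 1 + t^2 * χ := by
      calc ∑ y ∈ range (m+1), picOut m θ Q y * picOut m θ Q y / o y
          = ∑ y ∈ range (m+1), (o y + (2*t) * (W a y - o y)
              + t^2 * ((W a y - o y)^2 / o y)) := by
            apply sum_congr rfl
            intro y hy
            rw [hoQ y]
            have hne := (hout y hy).ne'
            field_simp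
            ring
        _ = 1 + (2*t) * ((∑ y ∈ range (m+1), W a y) - ∑ y ∈ range (m+1), o y)
              + t^2 * χ := by
            rw [Finset.sum_add_distrib, Finset.sum_add_distrib, ← Finset.mul_sum,
              ← Finset.mul_sum, Finset.sum_sub_distrib, hsum_o, hχ]
        _ = 1 + t^2 * χ := by rw [hsum_W, hsum_o]; ring
    have hR : -(∑ y ∈ range (m+1), picOut m θ Q y * Real.log (o y / picOut m θ Q y))
        ≤ t^2 * χ := by
      have h1 : ∑ y ∈ range (m+1), picOut m θ Q y * Real.log (o y / picOut m θ Q y)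
          = - ∑ y ∈ range (m+1), picOut m θ Q y * Real.log (picOut m θ Q y / o y) := by
        rw [← Finset.sum_neg_distrib]
        apply sum_congr rfl
        intro y hy
        have hlog : Real.log (o y / picOut m θ Q y)
            = - Real.log (picOut m θ Q y / o y) := by
          rw [← Real.log_inv, inv_div]
        rw [hlog]
        ring
      rw [h1, neg_neg]
      calc ∑ y ∈ range (m+1), picOut m θ Q y * Real.log (picOut m θ Q y / o y)
          ≤ (∑ y ∈ range (m+1), picOut m θ Q y * picOut m θ Q y / o y)
            - ∑ y ∈ range (m+1), picOut m θ Q y :=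
            sum_log_div_le _ _ _ hoQpos hout
        _ = t^2 * χ := by rw [hchisq, hsum_oQ]; ring
    -- optimality in nats
    have hoptn : nMI m θ Q ≤ J := by
      have h1 := hopt Q hQpmf
      have h2 : (0:ℝ) < Real.log 2 := Real.log_pos (by norm_num)
      rw [hJ, picMutInfo_eq_nMI m θ Q, picMutInfo_eq_nMI m θ P]
      exact mul_le_mul_of_nonneg_right h1 h2.le
    rw [hsplit, hfirst] at hoptn
    nlinarith [hR, hoptn]
  -- conclude
  by_contra hcon
  push_neg at hcon
  set d : ℝ := nG a - J with hd
  have hd0 : 0 < d := by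
    rw [hd]
    simp only [hnG] at hcon ⊢
    linarith
  set t : ℝ := min (1/2) (d / (2*(χ+1))) with htdef
  have ht0 : 0 < t := by
    apply lt_min (by norm_num)
    positivity
  have ht1 : t < 1 := lt_of_le_of_lt (min_le_left _ _) (by norm_num)
  have hkey := key t ht0 ht1
  have htle : t ≤ d / (2*(χ+1)) := min_le_right _ _
  have h1 : d ≤ t * χ := by
    have := hkey
    rw [pow_two] at this
    have h2 : t * d ≤ t * (t * χ) := by nlinarith
    exact le_of_mul_le_mul_left h2 ht0
  have h2 : t * χ ≤ (d / (2*(χ+1))) * χ := mul_le_mul_of_nonneg_right htle hχnn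
  have h3 : (d / (2*(χ+1))) * χ < d := by
    rw [div_mul_eq_mul_div, div_lt_iff₀ (by positivity)]
    nlinarith
  linarith

lemma bernoulli_kl_pos (p θ : ℝ) (hp0 : 0 < p) (hpθ : p < θ) (hθ1 : θ < 1) :
    0 < θ * (Real.log θ - Real.log p) + (1-θ) * (Real.log (1-θ) - Real.log (1-p)) := by
  have hθ0 : 0 < θ := lt_trans hp0 hpθ
  have h1θ : 0 < 1 - θ := by linarith
  have h1p : 0 < 1 - p := by linarith
  have h1 : Real.log p - Real.log θ < p/θ - 1 := by
    rw [← Real.log_div hp0.ne' hθ0.ne']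
    exact Real.log_lt_sub_one_of_pos (by positivity) (by
      intro h
      rw [div_eq_one_iff_eq hθ0.ne'] at h
      linarith)
  have h2 : Real.log (1-p) - Real.log (1-θ) ≤ (1-p)/(1-θ) - 1 := by
    rw [← Real.log_div h1p.ne' h1θ.ne']
    exact Real.log_le_sub_one_of_pos (by positivity)
  have h3 : θ * (Real.log p - Real.log θ) < θ * (p/θ - 1) :=
    mul_lt_mul_of_pos_left h1 hθ0
  have h4 : (1-θ) * (Real.log (1-p) - Real.log (1-θ)) ≤ (1-θ) * ((1-p)/(1-θ) - 1) :=
    mul_le_mul_of_nonneg_left h2 h1θ.le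
  have h5 : θ * (p/θ - 1) = p - θ := by field_simp
  have h6 : (1-θ) * ((1-p)/(1-θ) - 1) = θ - p := by field_simp; ring
  nlinarith

set_option maxHeartbeats 1000000 in
/-- Any capacity-achieving input distribution for the binomial
particle-intensity channel puts positive mass on the maximal symbol `m`. -/
theorem pic_optimal_input_pos_at_max
    (m : ℕ) (hm : 1 ≤ m) (θ : ℝ) (hθ : θ ∈ Set.Ioo (0 : ℝ) 1)
    (P : ℕ → ℝ) (hP : IsPMFOn m P)
    (hopt : ∀ Q : ℕ → ℝ, IsPMFOn m Q → picMutInfo m θ Q ≤ picMutInfo m θ P) :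
    0 < P m := by
  obtain ⟨hθ0, hθ1⟩ := hθ
  obtain ⟨hPnn, hPsum, hPz⟩ := hP
  by_contra hcon
  push_neg at hcon
  have hPm0 : P m = 0 := le_antisymm hcon (hPnn m)
  have hm0 : (0:ℝ) < (m:ℝ) := by exact_mod_cast hm
  have hmθ : (m:ℝ) * θ / m = θ := by field_simp
  by_cases hdeg : ∀ x ∈ range (m+1), x ≠ 0 → P x = 0
  case pos =>
    -- degenerate case : all mass at zero
    have hmem0 : (0:ℕ) ∈ range (m+1) := mem_range.mpr (by omega)
    have hmemm : m ∈ range (m+1) := mem_range.mpr (by omega)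
    have hP0 : P 0 = 1 := by
      have := Finset.sum_eq_single_of_mem (0:ℕ) hmem0
        (fun b hb hb0 => hdeg b hb hb0)
      rw [this] at hPsum
      exact hPsum
    have hW0 : ∀ y, picChannel m θ 0 y = if y = 0 then 1 else 0 := by
      intro y
      unfold picChannel
      rcases Nat.eq_zero_or_pos y with hy | hy
      · simp [hy]
      · have : y ≠ 0 := by omega
        simp [this, zero_pow]
    have houtP : ∀ y, picOut m θ P y = picChannel m θ 0 y := by
      intro y
      unfold picOut
      rw [Finset.sum_eq_single_of_mem (0:ℕ) hmem0
        (fun b hb hb0 => by rw [hdeg b hb hb0]; ring), hP0, one_mul]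
    have hMIP : picMutInfo m θ P = 0 := by
      unfold picMutInfo
      apply Finset.sum_eq_zero
      intro x hx
      apply Finset.sum_eq_zero
      intro y hy
      rcases Nat.eq_zero_or_pos x with hx0 | hx0
      · subst hx0
        rcases Nat.eq_zero_or_pos y with hy0 | hy0
        · subst hy0
          rw [houtP 0, div_self]
          · simp
          · rw [hW0 0]; norm_num
        · have : y ≠ 0 := by omega
          rw [hW0 y, if_neg this]
          ring
      · rw [hdeg x hx (by omega)]
        ring
    -- the competitor distribution
    set Q : ℕ → ℝ := fun x => if x = 0 then 1/2 else if x = m then 1/2 else 0 with hQ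
    have hm0' : m ≠ 0 := by omega
    have hQpmf : IsPMFOn m Q := by
      refine ⟨?_, ?_, ?_⟩
      · intro x
        rw [hQ]
        by_cases h1 : x = 0 <;> by_cases h2 : x = m <;> simp [h1, h2] <;> norm_num
      · have hQsplit : ∀ x ∈ range (m+1), Q x = (if x = 0 then (1:ℝ)/2 else 0)
            + (if x = m then (1:ℝ)/2 else 0) := by
          intro x _
          rw [hQ]
          by_cases h1 : x = 0
          · subst h1; simp [Ne.symm hm0']
          · by_cases h2 : x = m
            · subst h2; simp [h1]
            · simp [h1, h2]
        rw [sum_congr rfl hQsplit, Finset.sum_add_distrib,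
          Finset.sum_ite_eq' (range (m+1)) 0 (fun _ => (1:ℝ)/2),
          Finset.sum_ite_eq' (range (m+1)) m (fun _ => (1:ℝ)/2)]
        simp [hmem0, hmemm]
        norm_num
      · intro x hx
        have h1 : x ≠ 0 := by omega
        have h2 : x ≠ m := by omega
        simp [hQ, h1, h2]
    have houtQ : ∀ y, picOut m θ Q y
        = (1/2) * picChannel m θ 0 y + (1/2) * picChannel m θ m y := by
      intro y
      unfold picOut
      have hsplit : ∀ x ∈ range (m+1), Q x * picChannel m θ x y
          = (if x = 0 then (1/2) * picChannel m θ x y else 0)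
            + (if x = m then (1/2) * picChannel m θ x y else 0) := by
        intro x _
        rw [hQ]
        by_cases h1 : x = 0
        · subst h1; simp [Ne.symm hm0']
        · by_cases h2 : x = m
          · subst h2; simp [h1]
          · simp [h1, h2]
      rw [sum_congr rfl hsplit, Finset.sum_add_distrib,
        Finset.sum_ite_eq' (range (m+1)) 0 (fun x => (1/2) * picChannel m θ x y),
        Finset.sum_ite_eq' (range (m+1)) m (fun x => (1/2) * picChannel m θ x y)]
      simp [hmem0, hmemm]
    have hWm_pos : ∀ y ∈ range (m+1), 0 < picChannel m θ m y := by
      intro y hy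
      rw [picChannel_eq_binP, hmθ]
      exact binP_pos m θ hθ0 hθ1 y (Nat.lt_succ_iff.mp (mem_range.mp hy))
    have hW0_nonneg : ∀ y, 0 ≤ picChannel m θ 0 y :=
      picChannel_nonneg m θ hθ0 hθ1 0 (by omega)
    have houtQ_pos : ∀ y ∈ range (m+1), 0 < picOut m θ Q y := by
      intro y hy
      rw [houtQ y]
      have := hWm_pos y hy
      have := hW0_nonneg y
      nlinarith
    -- nMI Q > 0
    have hrow0 : ∑ y ∈ range (m+1), Q 0 * picChannel m θ 0 y
        * Real.log (picChannel m θ 0 y / picOut m θ Q y)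
        = (1/2) * Real.log (1 / picOut m θ Q 0) := by
      rw [Finset.sum_eq_single_of_mem (0:ℕ) hmem0]
      · rw [hW0 0, if_pos rfl, hQ]
        simp
      · intro y _ hy0
        rw [hW0 y, if_neg hy0]
        ring
    have houtQ0_lt : picOut m θ Q 0 < 1 := by
      rw [houtQ 0]
      have h1 : picChannel m θ 0 0 = 1 := by rw [hW0 0]; simp
      have h2 : picChannel m θ m 0 < 1 := by
        rw [picChannel_eq_binP, hmθ]
        unfold binP
        simp only [Nat.choose_zero_right, Nat.cast_one, pow_zero, Nat.sub_zero,
          one_mul]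
        calc (1-θ)^m ≤ (1-θ)^1 := by
              apply pow_le_pow_of_le_one (by linarith) (by linarith) hm
          _ = 1 - θ := pow_one _
          _ < 1 := by linarith
      rw [h1]
      linarith
    have hrow0_pos : 0 < (1/2) * Real.log (1 / picOut m θ Q 0) := by
      have h1 := houtQ_pos 0 hmem0
      have h2 : 1 < 1 / picOut m θ Q 0 := by
        rw [lt_div_iff₀ h1]
        linarith [houtQ0_lt]
      have := Real.log_pos h2
      linarith
    have hrowm : 0 ≤ ∑ y ∈ range (m+1), picChannel m θ m y
        * Real.log (picChannel m θ m y / picOut m θ Q y) := by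
      have h1 := sum_log_div_ge (range (m+1)) (picChannel m θ m) (picOut m θ Q)
        hWm_pos houtQ_pos
      rw [sum_picChannel, sum_picOut m θ Q hQpmf.2.1] at h1
      linarith
    have hnMIQ : 0 < nMI m θ Q := by
      rw [nMI_eq_sum_nG]
      have hsplit : ∀ x ∈ range (m+1), Q x *
          (∑ y ∈ range (m+1), picChannel m θ x y
            * Real.log (picChannel m θ x y / picOut m θ Q y))
          = (if x = 0 then (1/2) * Real.log (1 / picOut m θ Q 0) else 0)
            + (if x = m then (1/2) * (∑ y ∈ range (m+1), picChannel m θ m y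
                * Real.log (picChannel m θ m y / picOut m θ Q y)) else 0) := by
        intro x _
        by_cases h1 : x = 0
        · subst h1
          rw [if_neg (Ne.symm hm0'), if_pos rfl, ← hrow0, Finset.mul_sum]
          simp only [add_zero]
          apply sum_congr rfl
          intros; ring
        · by_cases h2 : x = m
          · subst h2
            rw [if_neg h1, if_pos rfl, hQ]
            simp [h1]
          · rw [if_neg h1, if_neg h2, hQ]
            simp [h1, h2]
      rw [sum_congr rfl hsplit, Finset.sum_add_distrib,
        Finset.sum_ite_eq' (range (m+1)) 0 _, Finset.sum_ite_eq' (range (m+1)) m _]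
      simp only [hmem0, hmemm, if_pos]
      nlinarith [hrow0_pos, hrowm]
    have hlog2 : (0:ℝ) < Real.log 2 := Real.log_pos (by norm_num)
    have h1 := hopt Q hQpmf
    rw [hMIP] at h1
    have h2 : picMutInfo m θ Q * Real.log 2 > 0 := by
      rw [← picMutInfo_eq_nMI]; exact hnMIQ
    nlinarith
  case neg =>
    push_neg at hdeg
    obtain ⟨x₀, hx₀mem, hx₀0, hx₀P⟩ := hdeg
    -- define the top of the support
    set S : Finset ℕ := (range (m+1)).filter (fun x => P x ≠ 0) with hS
    have hx₀S : x₀ ∈ S := mem_filter.mpr ⟨hx₀mem, hx₀P⟩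
    have hSne : S.Nonempty := ⟨x₀, hx₀S⟩
    set k : ℕ := S.max' hSne with hk
    have hkS : k ∈ S := S.max'_mem hSne
    have hPk : P k ≠ 0 := (mem_filter.mp hkS).2
    have hkm' : k ∈ range (m+1) := (mem_filter.mp hkS).1
    have hkm : k ≤ m := Nat.lt_succ_iff.mp (mem_range.mp hkm')
    have hk1 : 1 ≤ k := by
      have := Finset.le_max' S x₀ hx₀S
      omega
    have hkltm : k < m := by
      rcases Nat.lt_or_ge k m with h | h
      · exact h
      · exfalso; apply hPk; have : k = m := by omega
        rw [this]; exact hPm0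
    have hPle : ∀ x, P x ≠ 0 → x ≤ k := by
      intro x hx
      rcases Nat.lt_or_ge m x with h | h
      · exact absurd (hPz x h) hx
      · exact Finset.le_max' S x (mem_filter.mpr ⟨mem_range.mpr (by omega), hx⟩)
    set p : ℝ := (k:ℝ) * θ / m with hp
    have hp0 : 0 < p := by
      rw [hp]
      have : (0:ℝ) < (k:ℝ) := by exact_mod_cast hk1
      positivity
    have hpθ : p < θ := by
      rw [hp, div_lt_iff₀ hm0]
      have : (k:ℝ) < (m:ℝ) := by exact_mod_cast hkltm
      nlinarith
    have hp1 : p < 1 := lt_trans hpθ hθ1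
    have hPkpos : 0 < P k := lt_of_le_of_ne (hPnn k) (Ne.symm hPk)
    -- positivity of the output distribution
    have hout : ∀ y ∈ range (m+1), 0 < picOut m θ P y := by
      intro y hy
      unfold picOut
      apply Finset.sum_pos'
      · intro x hx
        exact mul_nonneg (hPnn x) (picChannel_nonneg m θ hθ0 hθ1 x
          (Nat.lt_succ_iff.mp (mem_range.mp hx)) y)
      · refine ⟨k, hkm', ?_⟩
        apply mul_pos hPkpos
        rw [picChannel_eq_binP]
        exact binP_pos m p hp0 hp1 y (Nat.lt_succ_iff.mp (mem_range.mp hy))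
    -- the increment bound on φ
    set lam : ℝ := Real.log p - Real.log (1-p) with hlam
    have h1p : (0:ℝ) < 1 - p := by linarith
    have hφstep : ∀ y, y < m →
        (fun y => Real.log (picOut m θ P y) - Real.log (m.choose y : ℝ)) (y+1)
          ≤ (fun y => Real.log (picOut m θ P y) - Real.log (m.choose y : ℝ)) y + lam := by
      intro y hy
      have hy1 : y + 1 ≤ m := by omega
      have hymem : y ∈ range (m+1) := mem_range.mpr (by omega)
      have hy1mem : y + 1 ∈ range (m+1) := mem_range.mpr (by omega)
      have hC0 : (0:ℝ) < (m.choose y : ℝ) := by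
        exact_mod_cast Nat.choose_pos (by omega : y ≤ m)
      have hC1 : (0:ℝ) < (m.choose (y+1) : ℝ) := by
        exact_mod_cast Nat.choose_pos hy1
      have hkey : picOut m θ P (y+1) * (m.choose y : ℝ) * (1-p)
          ≤ picOut m θ P y * (m.choose (y+1) : ℝ) * p := by
        unfold picOut
        rw [Finset.sum_mul, Finset.sum_mul, Finset.sum_mul, Finset.sum_mul]
        apply Finset.sum_le_sum
        intro x hx
        have hxm : x ≤ m := Nat.lt_succ_iff.mp (mem_range.mp hx)
        rcases eq_or_ne (P x) 0 with hPx | hPx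
        · simp [hPx]
        · have hxk : x ≤ k := hPle x hPx
          set q : ℝ := (x:ℝ) * θ / m with hq
          have hq0 : 0 ≤ q := by positivity
          have hqp : q ≤ p := by
            rw [hq, hp]
            have hxk' : (x:ℝ) * θ ≤ (k:ℝ) * θ := by
              have : (x:ℝ) ≤ (k:ℝ) := by exact_mod_cast hxk
              nlinarith
            exact div_le_div_of_nonneg_right hxk' hm0.le
          have hq1 : q < 1 := lt_of_le_of_lt hqp hp1
          have hsub1 : m - y = (m - (y+1)) + 1 := by omega
          have hch1 : picChannel m θ x (y+1)
              = (m.choose (y+1) : ℝ) * (q^y * q) * (1-q)^(m-(y+1)) := by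
            unfold picChannel
            rw [← hq, pow_succ]
          have hch0 : picChannel m θ x y
              = (m.choose y : ℝ) * q^y * ((1-q)^(m-(y+1)) * (1-q)) := by
            unfold picChannel
            rw [← hq, hsub1, pow_succ]
          rw [hch1, hch0]
          have hfac : 0 ≤ P x * ((m.choose (y+1) : ℝ) * (m.choose y : ℝ))
              * (q^y * (1-q)^(m-(y+1))) := by
            have h2 : (0:ℝ) ≤ 1 - q := by linarith
            exact mul_nonneg (mul_nonneg (hPnn x) (mul_nonneg hC1.le hC0.le))
              (mul_nonneg (pow_nonneg hq0 y) (pow_nonneg h2 _))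
          have hcore : q * (1-p) ≤ (1-q) * p := by nlinarith
          calc P x * ((m.choose (y+1) : ℝ) * (q^y * q) * (1-q)^(m-(y+1)))
                * (m.choose y : ℝ) * (1-p)
              = (P x * ((m.choose (y+1) : ℝ) * (m.choose y : ℝ))
                  * (q^y * (1-q)^(m-(y+1)))) * (q * (1-p)) := by ring
            _ ≤ (P x * ((m.choose (y+1) : ℝ) * (m.choose y : ℝ))
                  * (q^y * (1-q)^(m-(y+1)))) * ((1-q) * p) :=
                mul_le_mul_of_nonneg_left hcore hfac
            _ = P x * ((m.choose y : ℝ) * q^y * ((1-q)^(m-(y+1)) * (1-q)))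
                  * (m.choose (y+1) : ℝ) * p := by ring
      -- take logarithms
      have hA := hout (y+1) hy1mem
      have hB := hout y hymem
      have hlog := Real.log_le_log (mul_pos (mul_pos hA hC0) h1p) hkey
      rw [Real.log_mul (mul_pos hA hC0).ne' h1p.ne', Real.log_mul hA.ne' hC0.ne',
        Real.log_mul (mul_pos hB hC1).ne' hp0.ne', Real.log_mul hB.ne' hC1.ne'] at hlog
      show Real.log (picOut m θ P (y+1)) - Real.log (m.choose (y+1) : ℝ)
        ≤ Real.log (picOut m θ P y) - Real.log (m.choose y : ℝ) + lam
      rw [hlam]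
      linarith
    -- the shift bound
    set r : ℝ := (θ - p)/(1-p) with hr
    have hr0 : 0 < r := by rw [hr]; exact div_pos (by linarith) h1p
    have hr1 : r < 1 := by rw [hr, div_lt_one h1p]; linarith
    have hθeq : p + (1-p)*r = θ := by rw [hr]; field_simp; ring
    have hpr' : (1-p)*r = θ - p := by rw [hr]; field_simp
    have hshift := shift_bound m p r lam hp0 hp1 hr0 hr1
      (fun y => Real.log (picOut m θ P y) - Real.log (m.choose y : ℝ)) hφstep
    rw [hθeq, hpr'] at hshift
    -- decompositions of the two divergences
    have hnGm : ∑ y ∈ range (m+1), picChannel m θ m y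
          * Real.log (picChannel m θ m y / picOut m θ P y)
        = ((m:ℝ)*θ) * Real.log θ + ((m:ℝ) - m*θ) * Real.log (1-θ)
          - ∑ y ∈ range (m+1), binP m θ y
              * (Real.log (picOut m θ P y) - Real.log (m.choose y : ℝ)) := by
      rw [show ∑ y ∈ range (m+1), picChannel m θ m y
            * Real.log (picChannel m θ m y / picOut m θ P y)
          = ∑ y ∈ range (m+1), binP m θ y * Real.log (binP m θ y / picOut m θ P y) from
        sum_congr rfl fun y _ => by rw [picChannel_eq_binP, hmθ]]
      exact nG_decomp m θ hθ0 hθ1 (picOut m θ P) hout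
    have hnGk : ∑ y ∈ range (m+1), picChannel m θ k y
          * Real.log (picChannel m θ k y / picOut m θ P y)
        = ((m:ℝ)*p) * Real.log p + ((m:ℝ) - m*p) * Real.log (1-p)
          - ∑ y ∈ range (m+1), binP m p y
              * (Real.log (picOut m θ P y) - Real.log (m.choose y : ℝ)) := by
      rw [show ∑ y ∈ range (m+1), picChannel m θ k y
            * Real.log (picChannel m θ k y / picOut m θ P y)
          = ∑ y ∈ range (m+1), binP m p y * Real.log (binP m p y / picOut m θ P y) from
        sum_congr rfl fun y _ => by rw [picChannel_eq_binP, ← hp]]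
      exact nG_decomp m p hp0 hp1 (picOut m θ P) hout
    -- optimality facts
    have hGle : ∀ a, a ≤ m → (∑ y ∈ range (m+1), picChannel m θ a y
        * Real.log (picChannel m θ a y / picOut m θ P y)) ≤ nMI m θ P :=
      fun a ha => nG_le_nMI m hm θ hθ0 hθ1 P ⟨hPnn, hPsum, hPz⟩ hopt hout a ha
    have hJsum := nMI_eq_sum_nG m θ P
    have hsum0 : ∑ x ∈ range (m+1), P x * (nMI m θ P - ∑ y ∈ range (m+1),
        picChannel m θ x y * Real.log (picChannel m θ x y / picOut m θ P y)) = 0 := by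
      have e : ∀ x ∈ range (m+1), P x * (nMI m θ P - ∑ y ∈ range (m+1),
          picChannel m θ x y * Real.log (picChannel m θ x y / picOut m θ P y))
          = nMI m θ P * P x - P x * ∑ y ∈ range (m+1),
              picChannel m θ x y * Real.log (picChannel m θ x y / picOut m θ P y) :=
        fun x _ => by ring
      rw [sum_congr rfl e, Finset.sum_sub_distrib, ← Finset.mul_sum, hPsum, ← hJsum]
      ring
    have hterm0 : ∀ x ∈ range (m+1), 0 ≤ P x * (nMI m θ P - ∑ y ∈ range (m+1),
        picChannel m θ x y * Real.log (picChannel m θ x y / picOut m θ P y)) := by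
      intro x hx
      apply mul_nonneg (hPnn x)
      have := hGle x (Nat.lt_succ_iff.mp (mem_range.mp hx))
      linarith
    have hke := (Finset.sum_eq_zero_iff_of_nonneg hterm0).mp hsum0 k hkm'
    have hJk : nMI m θ P = ∑ y ∈ range (m+1),
        picChannel m θ k y * Real.log (picChannel m θ k y / picOut m θ P y) := by
      rcases mul_eq_zero.mp hke with h | h
      · exact absurd h hPk
      · linarith
    have hGmle := hGle m le_rfl
    -- strict improvement from k to m
    have hKL := bernoulli_kl_pos p θ hp0 hpθ hθ1
    have hmKL : 0 < (m:ℝ) * (θ * (Real.log θ - Real.log p)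
        + (1-θ) * (Real.log (1-θ) - Real.log (1-p))) := mul_pos hm0 hKL
    have hcomb : ((m:ℝ)*θ) * Real.log θ + ((m:ℝ) - m*θ) * Real.log (1-θ)
          - (((m:ℝ)*p) * Real.log p + ((m:ℝ) - m*p) * Real.log (1-p))
          - lam * ((m:ℝ)*(θ-p))
        = (m:ℝ) * (θ * (Real.log θ - Real.log p)
            + (1-θ) * (Real.log (1-θ) - Real.log (1-p))) := by
      rw [hlam]; ring
    linarith [hGmle, hJk, hnGm, hnGk, hshift, hcomb, hmKL]
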